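/- Fix real constants E, K, n', σ'_f, ε'_f > 0 and b, c < 0, and let φ : (0, ∞) → (0, ∞) be the unique function with CMB(φ(σ)) = RO(SD(σ)) for all σ > 0. Then the function g : ℝ → ℝ defined by g(s) = 1/φ(s) for s > 0 and g(s) = 0 for s ≤ 0 is continuous on all of ℝ. -/

import Mathlib

open Filter Set
open scoped Topology

theorem stmt6 (E K n' σf εf b c : ℝ) (hE : 0 < E) (hK : 0 < K) (hn : 0 < n')
    (hσf : 0 < σf) (hεf : 0 < εf) (hb : b < 0) (hc : c < 0)
    (RO CMB SD φ : ℝ → ℝ)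
    (hRO : ∀ σ : ℝ, RO σ = σ / E + (σ / K) ^ (1 / n'))
    (hCMB : ∀ N : ℝ, CMB N = σf / E * (2 * N) ^ b + εf * (2 * N) ^ c)
    (hSD : ∀ s : ℝ, 0 < s →
      0 < SD s ∧ (SD s) ^ 2 / E + SD s * (SD s / K) ^ (1 / n') = s ^ 2 / E)
    (hφ : ∀ σ : ℝ, 0 < σ → 0 < φ σ ∧ CMB (φ σ) = RO (SD σ))
    (g : ℝ → ℝ) (hg : ∀ s : ℝ, g s = if 0 < s then 1 / φ s else 0) :
    Continuous g := by
  have hp : 0 < 1 / n' := by positivity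
  set h : ℝ → ℝ := fun σ => σ ^ 2 / E + σ * (σ / K) ^ (1 / n') with hh
  -- h is strictly monotone on [0, ∞)
  have hmono_h : StrictMonoOn h (Ici 0) := by
    intro x hx y hy hxy
    simp only [hh, mem_Ici] at *
    apply add_lt_add_of_lt_of_le
    · gcongr
    · have h1 : (x / K) ^ (1 / n') ≤ (y / K) ^ (1 / n') :=
        Real.rpow_le_rpow (by positivity) (by gcongr) hp.le
      exact mul_le_mul hxy.le h1 (Real.rpow_nonneg (by positivity) _)
        (le_of_lt (lt_of_le_of_lt hx hxy))
  -- h is continuous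
  have hcont_h : Continuous h := by
    apply Continuous.add
    · fun_prop
    · exact continuous_id.mul
        ((continuous_id.div_const K).rpow_const fun x => Or.inr hp.le)
  have hSD' : ∀ s : ℝ, 0 < s → h (SD s) = s ^ 2 / E := fun s hs => (hSD s hs).2
  have hSDpos : ∀ s : ℝ, 0 < s → 0 < SD s := fun s hs => (hSD s hs).1
  -- SD is strictly monotone on (0, ∞)
  have hSDmono : StrictMonoOn SD (Ioi 0) := by
    intro x hx y hy hxy
    by_contra hle
    push_neg at hle
    have h1 : h (SD y) ≤ h (SD x) :=
      hmono_h.monotoneOn (le_of_lt (hSDpos y hy)) (le_of_lt (hSDpos x hx)) hle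
    rw [hSD' x hx, hSD' y hy] at h1
    have h2 : y ^ 2 ≤ x ^ 2 := (div_le_div_iff_of_pos_right hE).mp h1
    nlinarith [(mem_Ioi.mp hx).le, hxy]
  -- SD s ≤ s
  have hSDle : ∀ s : ℝ, 0 < s → SD s ≤ s := by
    intro s hs
    have h1 := hSD' s hs
    have h2 : 0 ≤ SD s * (SD s / K) ^ (1 / n') :=
      mul_nonneg (le_of_lt (hSDpos s hs))
        (Real.rpow_nonneg (div_nonneg (hSDpos s hs).le hK.le) _)
    have h3 : (SD s) ^ 2 / E ≤ s ^ 2 / E := by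
      simp only [hh] at h1; linarith
    have h4 : (SD s) ^ 2 ≤ s ^ 2 := by
      have := mul_le_mul_of_nonneg_right h3 hE.le
      rwa [div_mul_cancel₀, div_mul_cancel₀] at this <;> exact hE.ne'
    nlinarith [hSDpos s hs]
  -- SD is surjective onto (0, ∞)
  have hSDsurj : ∀ t : ℝ, 0 < t → ∃ s : ℝ, 0 < s ∧ SD s = t := by
    intro t ht
    have hht : 0 < h t := by
      have : 0 < t ^ 2 / E := by positivity
      have h2 : 0 ≤ t * (t / K) ^ (1 / n') :=
        mul_nonneg ht.le (Real.rpow_nonneg (by positivity) _)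
      simp only [hh]; linarith
    refine ⟨Real.sqrt (E * h t), Real.sqrt_pos.mpr (by positivity), ?_⟩
    have hs : (0:ℝ) < Real.sqrt (E * h t) := Real.sqrt_pos.mpr (by positivity)
    have h1 : h (SD (Real.sqrt (E * h t))) = (Real.sqrt (E * h t)) ^ 2 / E := hSD' _ hs
    rw [Real.sq_sqrt (by positivity), mul_div_cancel_left₀ _ hE.ne'] at h1
    exact hmono_h.injOn (mem_Ici.mpr (hSDpos _ hs).le) (mem_Ici.mpr ht.le) h1
  -- SD is continuous on (0, ∞)
  have hSDcont : ∀ a : ℝ, 0 < a → ContinuousAt SD a := by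
    intro a ha
    apply hSDmono.continuousAt_of_image_mem_nhds (Ioi_mem_nhds ha)
    apply mem_of_superset (Ioi_mem_nhds (hSDpos a ha))
    intro t ht
    obtain ⟨s, hs, hst⟩ := hSDsurj t ht
    exact ⟨s, hs, hst⟩
  -- RO is continuous
  have hROcont : Continuous RO := by
    have : RO = fun σ => σ / E + (σ / K) ^ (1 / n') := funext hRO
    rw [this]
    exact (continuous_id.div_const E).add
      ((continuous_id.div_const K).rpow_const fun x => Or.inr hp.le)
  -- RO is monotone / strictly monotone on [0, ∞)
  have hROmono : MonotoneOn RO (Ici 0) := by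
    intro x hx y hy hxy
    rw [hRO, hRO]
    have h1 : (x / K) ^ (1 / n') ≤ (y / K) ^ (1 / n') :=
      Real.rpow_le_rpow (div_nonneg hx hK.le) (by gcongr) hp.le
    have h2 : x / E ≤ y / E := by gcongr
    linarith
  have hROsmono : StrictMonoOn RO (Ici 0) := by
    intro x hx y hy hxy
    rw [hRO, hRO]
    have h1 : (x / K) ^ (1 / n') ≤ (y / K) ^ (1 / n') :=
      Real.rpow_le_rpow (div_nonneg hx hK.le) (by gcongr) hp.le
    have h2 : x / E < y / E := by gcongr
    linarith
  -- CMB is strictly antitone on (0, ∞) and positive there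
  have hCMBanti : StrictAntiOn CMB (Ioi 0) := by
    intro x hx y hy hxy
    rw [hCMB, hCMB]
    have hx2 : (0:ℝ) < 2 * x := by simp only [mem_Ioi] at hx; linarith
    have hxy2 : 2 * x < 2 * y := by linarith
    have h1 : (2 * y) ^ b < (2 * x) ^ b := Real.rpow_lt_rpow_of_neg hx2 hxy2 hb
    have h2 : (2 * y) ^ c < (2 * x) ^ c := Real.rpow_lt_rpow_of_neg hx2 hxy2 hc
    have h3 : σf / E * (2 * y) ^ b < σf / E * (2 * x) ^ b := by
      apply mul_lt_mul_of_pos_left h1 (by positivity)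
    have h4 : εf * (2 * y) ^ c < εf * (2 * x) ^ c :=
      mul_lt_mul_of_pos_left h2 hεf
    linarith
  have hCMBpos : ∀ N : ℝ, 0 < N → 0 < CMB N := by
    intro N hN
    rw [hCMB]
    have h1 : (0:ℝ) < (2 * N) ^ b := Real.rpow_pos_of_pos (by linarith) _
    have h2 : (0:ℝ) < (2 * N) ^ c := Real.rpow_pos_of_pos (by linarith) _
    positivity
  -- comparison lemmas via CMB
  have hkey : ∀ s : ℝ, 0 < s → ∀ N : ℝ, 0 < N → RO (SD s) < CMB N → N < φ s := by
    intro s hs N hN hlt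
    by_contra hle
    push_neg at hle
    have := hCMBanti.antitoneOn (mem_Ioi.mpr (hφ s hs).1) (mem_Ioi.mpr hN) hle
    rw [(hφ s hs).2] at this
    linarith
  have hkey2 : ∀ s : ℝ, 0 < s → ∀ N : ℝ, 0 < N → CMB N ≤ RO (SD s) → φ s ≤ N := by
    intro s hs N hN hle
    by_contra hlt
    push_neg at hlt
    have := hCMBanti (mem_Ioi.mpr hN) (mem_Ioi.mpr (hφ s hs).1) hlt
    rw [(hφ s hs).2] at this
    linarith
  have hRO0 : RO 0 = 0 := by
    rw [hRO]
    rw [zero_div, zero_div, Real.zero_rpow hp.ne', add_zero]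
  -- near 0, φ is large
  have hsmall : ∀ N : ℝ, 0 < N → ∃ δ : ℝ, 0 < δ ∧ ∀ s : ℝ, 0 < s → s < δ → N < φ s := by
    intro N hN
    have hten : Tendsto RO (𝓝 0) (𝓝 0) := by
      have := hROcont.continuousAt (x := 0)
      rwa [ContinuousAt, hRO0] at this
    have hev : ∀ᶠ s in 𝓝 (0:ℝ), RO s < CMB N :=
      hten.eventually_lt_const (hCMBpos N hN)
    rw [Metric.eventually_nhds_iff] at hev
    obtain ⟨δ, hδ, hδ'⟩ := hev
    refine ⟨δ, hδ, fun s hs hsδ => ?_⟩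
    have h1 : RO s < CMB N := hδ' (by rw [Real.dist_eq, sub_zero, abs_of_pos hs]; exact hsδ)
    have h2 : RO (SD s) ≤ RO s :=
      hROmono (mem_Ici.mpr (hSDpos s hs).le) (mem_Ici.mpr hs.le) (hSDle s hs)
    exact hkey s hs N hN (lt_of_le_of_lt h2 h1)
  -- far out, φ is small
  have hbig : ∀ N : ℝ, 0 < N → ∀ a : ℝ, ∃ cc : ℝ, a < cc ∧ 0 < cc ∧ φ cc ≤ N := by
    intro N hN a
    set t : ℝ := max 1 (E * CMB N) with hht
    have ht : 0 < t := lt_of_lt_of_le one_pos (le_max_left _ _)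
    obtain ⟨s1, hs1, hs1t⟩ := hSDsurj t ht
    refine ⟨max s1 (|a| + 1), ?_, ?_, ?_⟩
    · calc a ≤ |a| := le_abs_self a
        _ < |a| + 1 := by linarith
        _ ≤ _ := le_max_right _ _
    · exact lt_of_lt_of_le hs1 (le_max_left _ _)
    · have hcpos : 0 < max s1 (|a| + 1) := lt_of_lt_of_le hs1 (le_max_left _ _)
      have hm : SD s1 ≤ SD (max s1 (|a| + 1)) :=
        hSDmono.monotoneOn (mem_Ioi.mpr hs1) (mem_Ioi.mpr hcpos) (le_max_left _ _)
      rw [hs1t] at hm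
      have h1 : CMB N ≤ SD (max s1 (|a| + 1)) / E := by
        have : E * CMB N ≤ t := le_max_right _ _
        rw [le_div_iff₀ hE]
        linarith
      have h2 : SD (max s1 (|a| + 1)) / E ≤ RO (SD (max s1 (|a| + 1))) := by
        rw [hRO]
        have : 0 ≤ (SD (max s1 (|a| + 1)) / K) ^ (1 / n') :=
          Real.rpow_nonneg (div_nonneg (hSDpos _ hcpos).le hK.le) _
        linarith
      exact hkey2 _ hcpos N hN (h1.trans h2)
  -- φ is surjective onto (0, ∞)
  have hφsurj : ∀ N : ℝ, 0 < N → ∃ s : ℝ, 0 < s ∧ φ s = N := by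
    intro N hN
    obtain ⟨δ, hδ, hδ'⟩ := hsmall N hN
    set c0 : ℝ := δ / 2 with hc0
    have hc0pos : 0 < c0 := by positivity
    have hφc0 : N < φ c0 := hδ' c0 hc0pos (by simp only [hc0]; linarith)
    obtain ⟨c1, hc01, hc1pos, hφc1⟩ := hbig N hN c0
    have hcontOn : ContinuousOn (fun s => RO (SD s)) (Icc c0 c1) := by
      intro x hx
      exact ((hROcont.continuousAt).comp
        (hSDcont x (lt_of_lt_of_le hc0pos hx.1))).continuousWithinAt
    have hmem : CMB N ∈ Icc (RO (SD c0)) (RO (SD c1)) := by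
      constructor
      · rw [← (hφ c0 hc0pos).2]
        exact hCMBanti.antitoneOn (mem_Ioi.mpr hN) (mem_Ioi.mpr (hφ c0 hc0pos).1) hφc0.le
      · rw [← (hφ c1 hc1pos).2]
        exact hCMBanti.antitoneOn (mem_Ioi.mpr (hφ c1 hc1pos).1) (mem_Ioi.mpr hN) hφc1
    obtain ⟨s, hs, hseq⟩ := intermediate_value_Icc hc01.le hcontOn hmem
    have hspos : 0 < s := lt_of_lt_of_le hc0pos hs.1
    refine ⟨s, hspos, ?_⟩
    apply hCMBanti.injOn (mem_Ioi.mpr (hφ s hspos).1) (mem_Ioi.mpr hN)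
    rw [(hφ s hspos).2]
    simpa using hseq
  -- φ is strictly antitone on (0, ∞)
  have hφanti : StrictAntiOn φ (Ioi 0) := by
    intro x hx y hy hxy
    simp only [mem_Ioi] at hx hy
    have h1 : SD x < SD y := hSDmono (mem_Ioi.mpr hx) (mem_Ioi.mpr hy) hxy
    have h2 : RO (SD x) < RO (SD y) :=
      hROsmono (mem_Ici.mpr (hSDpos x hx).le) (mem_Ici.mpr (hSDpos y hy).le) h1
    rw [← (hφ x hx).2, ← (hφ y hy).2] at h2
    by_contra hle
    push_neg at hle
    have := hCMBanti.antitoneOn (mem_Ioi.mpr (hφ x hx).1) (mem_Ioi.mpr (hφ y hy).1) hle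
    linarith
  -- φ is continuous on (0, ∞)
  have hφcont : ∀ a : ℝ, 0 < a → ContinuousAt φ a := by
    intro a ha
    have hmono : StrictMonoOn (fun s => -φ s) (Ioi 0) := fun x hx y hy hxy =>
      neg_lt_neg (hφanti hx hy hxy)
    have hcont : ContinuousAt (fun s => -φ s) a := by
      apply hmono.continuousAt_of_image_mem_nhds (Ioi_mem_nhds ha)
      apply mem_of_superset (Iio_mem_nhds (neg_lt_zero.mpr (hφ a ha).1))
      intro v hv
      obtain ⟨s, hs, hseq⟩ := hφsurj (-v) (by simpa using hv)
      exact ⟨s, hs, by simp [hseq]⟩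
    have : ContinuousAt (fun s => -(-φ s)) a := hcont.neg
    simpa using this
  -- conclude
  rw [continuous_iff_continuousAt]
  intro a
  rcases lt_trichotomy a 0 with ha | ha | ha
  · have heq : g =ᶠ[𝓝 a] fun _ => (0:ℝ) := by
      filter_upwards [Iio_mem_nhds ha] with s hs
      rw [hg s, if_neg (not_lt.mpr (le_of_lt (mem_Iio.mp hs)))]
    exact ContinuousAt.congr continuousAt_const heq.symm
  · subst ha
    have hg0 : g 0 = 0 := by rw [hg 0, if_neg (lt_irrefl 0)]
    rw [ContinuousAt, hg0, Metric.tendsto_nhds]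
    intro ε hε
    have hN : (0:ℝ) < 1 / ε + 1 := by positivity
    obtain ⟨δ, hδ, hδ'⟩ := hsmall (1 / ε + 1) hN
    rw [Metric.eventually_nhds_iff]
    refine ⟨δ, hδ, fun {s} hsδ => ?_⟩
    rw [Real.dist_eq, sub_zero] at hsδ ⊢
    rcases le_or_gt s 0 with hs | hs
    · rw [hg s, if_neg (not_lt.mpr hs), abs_zero]; exact hε
    · have h1 : 1 / ε + 1 < φ s := hδ' s hs (lt_of_abs_lt hsδ)
      have hφpos : 0 < φ s := lt_trans hN h1
      rw [hg s, if_pos hs, abs_of_pos (by positivity)]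
      have h2 : 1 / φ s < 1 / (1 / ε + 1) := one_div_lt_one_div_of_lt hN h1
      have h3 : 1 / (1 / ε + 1) < ε := by
        rw [div_lt_iff₀ hN]
        have : ε * (1 / ε) = 1 := by field_simp
        nlinarith
      linarith
  · have heq : g =ᶠ[𝓝 a] fun s => 1 / φ s := by
      filter_upwards [Ioi_mem_nhds ha] with s hs
      rw [hg s, if_pos (mem_Ioi.mp hs)]
    have hcont : ContinuousAt (fun s => 1 / φ s) a :=
      continuousAt_const.div (hφcont a ha) (ne_of_gt (hφ a ha).1)
    exact ContinuousAt.congr hcont heq.symm
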